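/- Let d, r be integers with 0 < r < d, set n = d + r, and let A ∈ Γ_n^d. If 1 ≤ m ≤ k ≤ r, then for every i ∈ {1,…,n}, per(A_{i,m}) ≥ per(A_{i,k}). If d+1 ≤ m ≤ k ≤ d+r, then for every i ∈ {1,…,n}, per(A_{i,m}) ≤ per(A_{i,k}). -/

import Mathlib

/-- The permanent of an `n × n` matrix: `per(A) = ∑_{σ ∈ S_n} ∏_i A i (σ i)`. -/
def permanent {n : ℕ}  (A : Matrix (Fin n) (Fin n) ℕ) : ℕ :=
  ∑ σ : Equiv.Perm (Fin n), ∏ i, A i (σ i)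

/-- The `(0,1)`-matrix determined by the configuration `x` (1-indexed starting columns):
entry `(i,j)` (with `j : Fin n` representing column `j+1`) is `1` iff
`x i ≤ j+1 ≤ x i + d - 1`. -/
def confMatrix (n d : ℕ) (x : Fin n → ℕ) : Matrix (Fin n) (Fin n) ℕ :=
  fun i j => if x i ≤ (j : ℕ) + 1 ∧ (j : ℕ) + 1 ≤ x i + d - 1 then 1 else 0

/-- A valid configuration for `Γ_n^d`: `1 ≤ x i ≤ n - d + 1` for all `i`. -/
def ValidConf (n d : ℕ) (x : Fin n → ℕ) : Prop :=
  ∀ i, 1 ≤ x i ∧ x i ≤ n - d + 1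

/-- Membership in `Γ_n^d`: the set of `n × n` `(0,1)`-matrices each of whose rows has
exactly `d` ones forming a contiguous block. -/
def IsGamma (n d : ℕ) (A : Matrix (Fin n) (Fin n) ℕ) : Prop :=
  ∃ x : Fin n → ℕ, ValidConf n d x ∧ A = confMatrix n d x

/-- `A_{i,j}`: the matrix obtained from `A` by deleting row `i` and column `j`. -/
def delMinor {n : ℕ} (A : Matrix (Fin (n + 1)) (Fin (n + 1)) ℕ) (i j : Fin (n + 1)) :
    Matrix (Fin n) (Fin n) ℕ :=
  A.submatrix i.succAbove j.succAbove


lemma permanent_mono {n : ℕ} {B C : Matrix (Fin n) (Fin n) ℕ}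
    (h : ∀ i j, B i j ≤ C i j) : permanent B ≤ permanent C :=
  Finset.sum_le_sum fun σ _ => Finset.prod_le_prod' fun i _ => h i (σ i)

lemma permanent_col_perm {n : ℕ} (B : Matrix (Fin n) (Fin n) ℕ) (e : Equiv.Perm (Fin n)) :
    permanent (B.submatrix id e) = permanent B :=
  Fintype.sum_bijective (fun σ => e * σ) (Group.mulLeft_bijective e) _ _ fun _ => rfl

lemma per_del_le {n : ℕ} (A : Matrix (Fin (n + 1)) (Fin (n + 1)) ℕ) (i c c' : Fin (n + 1))
    (h : ∀ i', A i' c ≤ A i' c') :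
    permanent (delMinor A i c') ≤ permanent (delMinor A i c) := by
  set ψ : Equiv.Perm (Fin (n + 1)) := Equiv.swap c c' with hψ
  set χ : Option (Fin n) ≃ Option (Fin n) :=
    (finSuccEquiv' c').symm.trans (ψ.trans (finSuccEquiv' c)) with hχ
  set e : Fin n ≃ Fin n := χ.removeNone with he
  have key : ∀ j : Fin n, c.succAbove (e j) = ψ (c'.succAbove j) := by
    intro j
    have hb : ψ (c'.succAbove j) ≠ c := by
      intro hb
      have : c'.succAbove j = ψ⁻¹ c := by
        rw [← hb]; simp
      rw [hψ] at this
      simp [Equiv.swap_apply_left] at this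
    obtain ⟨k, hk⟩ := Fin.exists_succAbove_eq hb
    have hχj : χ (some j) = some k := by
      rw [hχ]
      simp only [Equiv.trans_apply, finSuccEquiv'_symm_some]
      rw [← hk, finSuccEquiv'_succAbove]
    have : some (e j) = χ (some j) := Equiv.removeNone_some χ ⟨k, hχj⟩
    rw [hχj] at this
    have : e j = k := Option.some_injective _ this
    rw [this, hk]
  have step1 : permanent (delMinor A i c') ≤ permanent ((delMinor A i c).submatrix id e) := by
    apply permanent_mono
    intro i' j
    show A (i.succAbove i') (c'.succAbove j) ≤ A (i.succAbove i') (c.succAbove (e j))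
    rw [key j]
    by_cases hc : c'.succAbove j = c
    · rw [hc, hψ, Equiv.swap_apply_left]
      exact h _
    · rw [hψ, Equiv.swap_apply_of_ne_of_ne hc (Fin.succAbove_ne c' j)]
  calc permanent (delMinor A i c') ≤ permanent ((delMinor A i c).submatrix id e) := step1
    _ = permanent (delMinor A i c) := permanent_col_perm _ e

/-- For `A ∈ Γ_n^d`, `n = d + r`, `0 < r < d`: if `1 ≤ m ≤ k ≤ r` (columns `c₂, c₁`
below represent `m = c₂+1`, `k = c₁+1`... stated directly: for columns `c₁+1 ≤ c₂+1 ≤ r`)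
then `per(A_{i,c₁}) ≥ per(A_{i,c₂})` for every row `i`; and if `d+1 ≤ c₁+1 ≤ c₂+1 ≤ d+r`
then `per(A_{i,c₁}) ≤ per(A_{i,c₂})` for every row `i`. -/
theorem minor_permanent_monotone (d r m : ℕ) (hr : 0 < r) (hrd : r < d)
    (hn : m + 1 = d + r)
    (A : Matrix (Fin (m + 1)) (Fin (m + 1)) ℕ) (hA : IsGamma (m + 1) d A) :
    (∀ c₁ c₂ : Fin (m + 1), (c₁ : ℕ) ≤ (c₂ : ℕ) → (c₂ : ℕ) + 1 ≤ r →
      ∀ i : Fin (m + 1), permanent (delMinor A i c₂) ≤ permanent (delMinor A i c₁)) ∧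
    (∀ c₁ c₂ : Fin (m + 1), d + 1 ≤ (c₁ : ℕ) + 1 → (c₁ : ℕ) ≤ (c₂ : ℕ) →
      ∀ i : Fin (m + 1), permanent (delMinor A i c₁) ≤ permanent (delMinor A i c₂)) := by
  obtain ⟨x, hx, rfl⟩ := hA
  constructor
  · intro c₁ c₂ hle hc₂ i
    apply per_del_le
    intro i'
    obtain ⟨h1, h2⟩ := hx i'
    simp only [confMatrix]
    split_ifs with hp hq <;> omega
  · intro c₁ c₂ hc₁ hle i
    apply per_del_le
    intro i'
    obtain ⟨h1, h2⟩ := hx i'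
    simp only [confMatrix]
    split_ifs with hp hq <;> omega
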